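/- Let n be a positive integer, let S, T ⊆ ℤ/nℤ, and let a, b, c be positive integers such that the difference set S − S contains no residue of an integer in {1, …, a−1}, the difference set T − T contains no residue of an integer in {1, …, a−1}, and the difference set S − T contains no residue of an integer in {−(c−1), …, b−1}. Then |S| + |T| ≤ max( n/a , 2n/(b+c) ). -/
import Mathlib


open scoped BigOperators

namespace WordGrid

variable {α : Type*}

/-- A valid word-search direction in dimension `d`: a nonzero vector with
entries in `{-1, 0, 1}`. -/
def IsDir (d : ℕ) (v : Fin d → ℤ) : Prop :=
  (∀ i, v i = -1 ∨ v i = 0 ∨ v i = 1) ∧ v ≠ 0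

/-- `(p, v)` is an appearance of the word `w` in the grid `Γ` of shape
`ZMod (n 0) × ⋯ × ZMod (n (d-1))`: reading from `p` in direction `v`
(reduced coordinatewise into the shape group) spells out `w`. -/
def Appears {d : ℕ} (n : Fin d → ℕ) (Γ : (∀ i, ZMod (n i)) → α) (w : List α)
    (p : ∀ i, ZMod (n i)) (v : Fin d → ℤ) : Prop :=
  IsDir d v ∧
    ∀ k : Fin w.length, Γ (fun j => p j + (((k : ℤ) * v j : ℤ) : ZMod (n j))) = w.get k

/-- The number of appearances of the word `w` in the grid `Γ`. -/
noncomputable def count {d : ℕ} (n : Fin d → ℕ) (Γ : (∀ i, ZMod (n i)) → α)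
    (w : List α) : ℕ :=
  Set.ncard {pv : (∀ i, ZMod (n i)) × (Fin d → ℤ) | Appears n Γ w pv.1 pv.2}

/-- The concentration of the word `w` in the grid `Γ`: the number of
appearances divided by the size of the grid. -/
noncomputable def conc {d : ℕ} (n : Fin d → ℕ) (Γ : (∀ i, ZMod (n i)) → α)
    (w : List α) : ℝ :=
  (count n Γ w : ℝ) / ((∏ i, n i : ℕ) : ℝ)

/-- `C d w`: the supremum of the concentration of `w` over all `d`-dimensional
grids (of all shapes with every side length positive). -/
noncomputable def C (d : ℕ) (w : List α) : ℝ :=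
  sSup {x : ℝ | ∃ (n : Fin d → ℕ) (Γ : (∀ i, ZMod (n i)) → α),
    (∀ i, 0 < n i) ∧ x = conc n Γ w}

/-- The word `w` contains at least two distinct letters. -/
def TwoLetters (w : List α) : Prop := ∃ x ∈ w, ∃ y ∈ w, x ≠ y



lemma key {n : ℕ} (hn : 0 < n) (x y : ZMod n) (k : ℤ)
    (h : (n : ℤ) ∣ ((x.val : ℤ) - (y.val : ℤ) - k)) : x - y = (k : ZMod n) := by
  haveI : NeZero n := ⟨hn.ne'⟩
  have h0 : (((x.val : ℤ) - (y.val : ℤ) - k : ℤ) : ZMod n) = 0 := by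
    rw [ZMod.intCast_zmod_eq_zero_iff_dvd]; exact_mod_cast h
  push_cast at h0
  rw [ZMod.natCast_val, ZMod.natCast_val, ZMod.cast_id, ZMod.cast_id] at h0
  linear_combination h0

lemma flipkey {n : ℕ} (x y : ZMod n) (k : ℤ) (h : x - y = (k : ZMod n)) :
    y - x = ((-k : ℤ) : ZMod n) := by
  push_cast
  rw [← h]; ring

theorem statement12 (n : ℕ) (hn : 0 < n) (S T : Finset (ZMod n))
    (a b c : ℕ) (ha : 0 < a) (hb : 0 < b) (hc : 0 < c)
    (hS : ∀ s ∈ S, ∀ s' ∈ S, ∀ k : ℤ, 1 ≤ k → k ≤ (a : ℤ) - 1 →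
      s - s' ≠ (k : ZMod n))
    (hT : ∀ t ∈ T, ∀ t' ∈ T, ∀ k : ℤ, 1 ≤ k → k ≤ (a : ℤ) - 1 →
      t - t' ≠ (k : ZMod n))
    (hST : ∀ s ∈ S, ∀ t ∈ T, ∀ k : ℤ, -((c : ℤ) - 1) ≤ k → k ≤ (b : ℤ) - 1 →
      s - t ≠ (k : ZMod n)) :
    (S.card : ℝ) + (T.card : ℝ) ≤ max ((n : ℝ) / (a : ℝ)) (2 * (n : ℝ) / ((b : ℝ) + (c : ℝ))) := by
  haveI : NeZero (2 * n) := ⟨by omega⟩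
  set L : ℕ := min (2 * a) (b + c) with hLdef
  have hL1 : 1 ≤ L := by omega
  have hL2a' : L ≤ 2 * a := by omega
  have hLbc' : L ≤ b + c := by omega
  have hL2a : (L : ℤ) ≤ 2 * a := by exact_mod_cast hL2a'
  have hLbc : (L : ℤ) ≤ b + c := by exact_mod_cast hLbc'
  set δ : ℤ := 2 * (b : ℤ) - L with hδdef
  set f : ((↥S ⊕ ↥T) × Fin L) → ZMod (2 * n) := fun p =>
    ((Sum.elim (fun s : ↥S => 2 * (((s : ZMod n)).val : ℤ))
        (fun t : ↥T => 2 * (((t : ZMod n)).val : ℤ) + δ) p.1 + (p.2 : ℤ) : ℤ) : ZMod (2 * n))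
    with hfdef
  have hf : Function.Injective f := by
    rintro ⟨x, i⟩ ⟨y, j⟩ h
    have hi : (i : ℤ) < L := by exact_mod_cast i.isLt
    have hj : (j : ℤ) < L := by exact_mod_cast j.isLt
    have hi0 : (0 : ℤ) ≤ i := by positivity
    have hj0 : (0 : ℤ) ≤ j := by positivity
    rcases x with s | t <;> rcases y with s' | t' <;>
      simp only [hfdef, Sum.elim_inl, Sum.elim_inr] at h <;>
      rw [ZMod.intCast_eq_intCast_iff] at h <;>
      obtain ⟨q, hq⟩ := h.dvd <;> push_cast at hq
    -- case SS
    · set k : ℤ := (n : ℤ) * q - (s' : ZMod n).val + (s : ZMod n).val with hk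
      have hm : (j : ℤ) - i = 2 * k := by rw [hk]; linarith
      rcases lt_trichotomy k 0 with hk0 | hk0 | hk0
      · exact absurd (key hn (s' : ZMod n) (s : ZMod n) (-k) ⟨q, by rw [hk]; ring⟩)
          (hS s' s'.2 s s.2 (-k) (by omega) (by omega))
      · have hij : i = j := by apply Fin.ext; omega
        have hss : (s : ZMod n) = s' := by
          have := key hn (s : ZMod n) (s' : ZMod n) 0 ⟨-q, by rw [hk] at hk0; push_cast; linarith⟩
          simpa [sub_eq_zero] using this
        subst hij
        simp [Subtype.ext hss]
      · exact absurd (key hn (s : ZMod n) (s' : ZMod n) k ⟨-q, by rw [hk]; ring⟩)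
          (hS s s.2 s' s'.2 k (by omega) (by omega))
    -- case ST
    · set k : ℤ := (n : ℤ) * q - (t' : ZMod n).val + (s : ZMod n).val with hk
      have hm : (j : ℤ) - i + δ = 2 * k := by rw [hk, hδdef]; linarith
      exact absurd (key hn (s : ZMod n) (t' : ZMod n) k ⟨-q, by rw [hk]; ring⟩)
        (hST s s.2 t' t'.2 k (by rw [hδdef] at hm; omega) (by rw [hδdef] at hm; omega))
    -- case TS
    · set k : ℤ := (n : ℤ) * q - (s' : ZMod n).val + (t : ZMod n).val with hk
      have hm : (j : ℤ) - i - δ = 2 * k := by rw [hk, hδdef]; linarith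
      have : (s' : ZMod n) - t = ((-k : ℤ) : ZMod n) :=
        flipkey _ _ k (key hn (t : ZMod n) (s' : ZMod n) k ⟨-q, by rw [hk]; ring⟩)
      exact absurd this
        (hST s' s'.2 t t.2 (-k) (by rw [hδdef] at hm; omega) (by rw [hδdef] at hm; omega))
    -- case TT
    · set k : ℤ := (n : ℤ) * q - (t' : ZMod n).val + (t : ZMod n).val with hk
      have hm : (j : ℤ) - i = 2 * k := by rw [hk]; linarith
      rcases lt_trichotomy k 0 with hk0 | hk0 | hk0
      · exact absurd (key hn (t' : ZMod n) (t : ZMod n) (-k) ⟨q, by rw [hk]; ring⟩)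
          (hT t' t'.2 t t.2 (-k) (by omega) (by omega))
      · have hij : i = j := by apply Fin.ext; omega
        have htt : (t : ZMod n) = t' := by
          have := key hn (t : ZMod n) (t' : ZMod n) 0 ⟨-q, by rw [hk] at hk0; push_cast; linarith⟩
          simpa [sub_eq_zero] using this
        subst hij
        simp [Subtype.ext htt]
      · exact absurd (key hn (t : ZMod n) (t' : ZMod n) k ⟨-q, by rw [hk]; ring⟩)
          (hT t t.2 t' t'.2 k (by omega) (by omega))
  have hcard := Fintype.card_le_of_injective f hf
  simp [Fintype.card_prod, Fintype.card_sum, Fintype.card_coe, ZMod.card, Fintype.card_fin] at hcard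
  -- hcard : (S.card + T.card) * L ≤ 2 * n
  rcases le_total (2 * a) (b + c) with hcase | hcase
  · have hLa : L = 2 * a := by omega
    rw [hLa] at hcard
    apply le_max_of_le_left
    rw [le_div_iff₀ (by exact_mod_cast ha : (0:ℝ) < a)]
    have h2 : (S.card + T.card) * a ≤ n := by
      have h3 : 2 * ((S.card + T.card) * a) ≤ 2 * n := by
        calc 2 * ((S.card + T.card) * a) = (S.card + T.card) * (2 * a) := by ring
          _ ≤ 2 * n := hcard
      omega
    calc ((S.card : ℝ) + T.card) * a = ((S.card + T.card) * a : ℕ) := by push_cast; ring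
      _ ≤ n := by exact_mod_cast h2
  · have hLa : L = b + c := by omega
    rw [hLa] at hcard
    apply le_max_of_le_right
    have hbc0 : (0:ℝ) < (b:ℝ) + c := by
      have h1 : (0:ℝ) < (b:ℝ) := by exact_mod_cast hb
      have h2 : (0:ℝ) ≤ (c:ℝ) := by positivity
      linarith
    rw [le_div_iff₀ hbc0]
    calc ((S.card : ℝ) + T.card) * ((b:ℝ) + c) = ((S.card + T.card) * (b + c) : ℕ) := by push_cast; ring
      _ ≤ 2 * n := by exact_mod_cast hcard
      _ = 2 * (n:ℝ) := by push_cast; ring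

end WordGrid
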